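/- Let A ∈ ℝ^{n×n} be a payoff matrix such that the zero-sum game max_π min_{π'} Σ_{i,j} π_i π'_j A_{ij} has a unique maximin solution π* with π* > 0, and let (u*, t*) be the associated KKT multipliers. Then u*_j > 0 for every j ∈ [n], and Σ_i π*_i A_{ij} = t* for every j ∈ [n]. -/
import Mathlib


open Finset

/-- A probability vector on `Fin n`. -/
def IsProb {n : ℕ} (π : Fin n → ℝ) : Prop := (∀ i, 0 ≤ π i) ∧ ∑ i, π i = 1

/-- Expected payoff of the two-player game with payoff matrix `A`. -/
def payoff {n : ℕ} (A : Fin n → Fin n → ℝ) (π π' : Fin n → ℝ) : ℝ :=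
  ∑ i, ∑ j, π i * π' j * A i j

/-- Nash equilibrium of the zero-sum game with payoff matrix `A`. -/
def IsNash {n : ℕ} (A : Fin n → Fin n → ℝ) (π₁ π₂ : Fin n → ℝ) : Prop :=
  IsProb π₁ ∧ IsProb π₂ ∧
  (∀ π, IsProb π → payoff A π π₂ ≤ payoff A π₁ π₂) ∧
  (∀ π', IsProb π' → payoff A π₁ π₂ ≤ payoff A π₁ π')


/-- The worst-case payoff for the first player playing `π`. -/
noncomputable def worstCase {n : ℕ} (A : Fin n → Fin n → ℝ) (π : Fin n → ℝ) : ℝ :=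
  sInf ((fun π' => payoff A π π') '' {π' | IsProb π'})

/-- `π` is an optimal maximin strategy for the first player. -/
def IsMaximin {n : ℕ} (A : Fin n → Fin n → ℝ) (π : Fin n → ℝ) : Prop :=
  IsProb π ∧ ∀ π', IsProb π' → worstCase A π' ≤ worstCase A π

lemma prob_le_one {n : ℕ} {π : Fin n → ℝ} (hπ : IsProb π) (i : Fin n) : π i ≤ 1 := by
  rw [← hπ.2]
  exact Finset.single_le_sum (fun j _ => hπ.1 j) (mem_univ i)

lemma payoff_bdd {n : ℕ} (A : Fin n → Fin n → ℝ) {π : Fin n → ℝ} (hπ : IsProb π) :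
    BddBelow ((fun π' => payoff A π π') '' {π' | IsProb π'}) := by
  refine ⟨-∑ i, ∑ j, |A i j|, ?_⟩
  rintro x ⟨π', hπ', rfl⟩
  have hb : ∀ i j, -|A i j| ≤ π i * π' j * A i j := by
    intro i j
    have h1 : |π i * π' j * A i j| ≤ |A i j| := by
      rw [abs_mul, abs_mul, abs_of_nonneg (hπ.1 i), abs_of_nonneg (hπ'.1 j)]
      nlinarith [mul_nonneg (sub_nonneg.mpr (prob_le_one hπ i))
          (mul_nonneg (hπ'.1 j) (abs_nonneg (A i j))),
        mul_nonneg (sub_nonneg.mpr (prob_le_one hπ' j)) (abs_nonneg (A i j))]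
    linarith [neg_abs_le (π i * π' j * A i j)]
  have h2 : ∑ i, ∑ j, (-|A i j|) ≤ payoff A π π' :=
    Finset.sum_le_sum fun i _ => Finset.sum_le_sum fun j _ => hb i j
  simpa [Finset.sum_neg_distrib] using h2

lemma worst_le {n : ℕ} (A : Fin n → Fin n → ℝ) {π π' : Fin n → ℝ} (hπ : IsProb π)
    (hπ' : IsProb π') : worstCase A π ≤ payoff A π π' :=
  csInf_le (payoff_bdd A hπ) ⟨π', hπ', rfl⟩

/-- The linear functional `d ↦ ∑ i, A i j * d i` (column `j` paired with `d`). -/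
noncomputable def colL {n : ℕ} (A : Fin n → Fin n → ℝ) (j : Fin n) : (Fin n → ℝ) →ₗ[ℝ] ℝ where
  toFun d := ∑ i, A i j * d i
  map_add' x y := by simp [mul_add, Finset.sum_add_distrib]
  map_smul' c x := by simp [Finset.mul_sum]; exact Finset.sum_congr rfl fun i _ => by ring

/-- The linear functional `d ↦ ∑ i, d i`. -/
noncomputable def sumL {n : ℕ} : (Fin n → ℝ) →ₗ[ℝ] ℝ where
  toFun d := ∑ i, d i
  map_add' x y := by simp [Finset.sum_add_distrib]
  map_smul' c x := by simp [Finset.mul_sum]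

lemma exists_dir {n : ℕ} (A : Fin n → Fin n → ℝ) (u : Fin n → ℝ) (t : ℝ)
    (hu0 : ∀ j, 0 ≤ u j) (hu1 : ∑ j, u j = 1)
    (hKKT3 : ∀ i, ∑ j, A i j * u j = t)
    (j0 : Fin n) (hj0 : u j0 = 0) :
    ∃ d : Fin n → ℝ, d ≠ 0 ∧ (∑ i, d i = 0) ∧ ∀ j, 0 ≤ ∑ i, A i j * d i := by
  classical
  set S : Finset (Fin n) := univ.filter (fun j => u j ≠ 0) with hS
  have hmemS : ∀ j, j ∈ S ↔ u j ≠ 0 := fun j => by simp [hS]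
  have hj0S : j0 ∉ S := by simp [hmemS, hj0]
  have hSne : S.Nonempty := by
    by_contra h
    rw [Finset.not_nonempty_iff_eq_empty] at h
    have : ∀ j, u j = 0 := by
      intro j
      by_contra hj
      have : j ∈ S := (hmemS j).mpr hj
      simp [h] at this
    rw [Finset.sum_congr rfl fun j _ => this j] at hu1
    simp at hu1
  obtain ⟨j1, hj1⟩ := hSne
  -- the key linear relation
  have hrel : ∀ d : Fin n → ℝ, ∑ j : ↥S, u j.1 * colL A j.1 d = t * sumL d := by
    intro d
    have h1 : ∑ j : ↥S, u j.1 * colL A j.1 d = ∑ j ∈ S, u j * colL A j d := by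
      rw [Finset.univ_eq_attach]; exact S.sum_attach (fun j => u j * colL A j d)
    have h2 : ∑ j ∈ S, u j * colL A j d = ∑ j, u j * colL A j d := by
      apply Finset.sum_subset (Finset.subset_univ S)
      intro x _ hx
      have : u x = 0 := by by_contra hc; exact hx ((hmemS x).mpr hc)
      simp [this]
    rw [h1, h2]
    show ∑ j, u j * ∑ i, A i j * d i = t * ∑ i, d i
    calc ∑ j, u j * ∑ i, A i j * d i
        = ∑ j, ∑ i, u j * (A i j * d i) := by
          exact Finset.sum_congr rfl fun j _ => Finset.mul_sum _ _ _
      _ = ∑ i, ∑ j, u j * (A i j * d i) := Finset.sum_comm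
      _ = ∑ i, (∑ j, A i j * u j) * d i := by
          refine Finset.sum_congr rfl fun i _ => ?_
          rw [Finset.sum_mul]
          exact Finset.sum_congr rfl fun j _ => by ring
      _ = ∑ i, t * d i := by
          exact Finset.sum_congr rfl fun i _ => by rw [hKKT3 i]
      _ = t * ∑ i, d i := (Finset.mul_sum _ _ _).symm
  -- the linear maps
  set Φ : (Fin n → ℝ) →ₗ[ℝ] (ℝ × (↥S → ℝ)) :=
    LinearMap.prod sumL (LinearMap.pi fun j : ↥S => colL A j.1) with hΦ
  set ψ : (ℝ × (↥S → ℝ)) →ₗ[ℝ] ℝ :=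
    { toFun := fun p => (∑ j : ↥S, u j.1 * p.2 j) - t * p.1
      map_add' := fun x y => by
        simp [mul_add, Finset.sum_add_distrib]; ring
      map_smul' := fun c x => by
        simp [Finset.mul_sum, mul_sub, mul_left_comm] } with hψ
  have hψ0 : ψ ≠ 0 := by
    intro h
    have h1 : ψ (0, Pi.single ⟨j1, hj1⟩ 1) = u j1 := by
      simp [hψ, Pi.single_apply]
    rw [h] at h1
    simp at h1
    exact ((hmemS j1).mp hj1) h1.symm
  have hrange : LinearMap.range Φ ≤ LinearMap.ker ψ := by
    rintro p ⟨d, rfl⟩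
    simp only [LinearMap.mem_ker, hψ, hΦ]
    show (∑ j : ↥S, u j.1 * colL A j.1 d) - t * sumL d = 0
    rw [hrel d]; ring
  -- finrank bound on ker Φ
  have hfrP : Module.finrank ℝ (ℝ × (↥S → ℝ)) = 1 + S.card := by
    simp [Module.finrank_prod, Module.finrank_pi, Fintype.card_coe]
  have hkerψ : Module.finrank ℝ (LinearMap.ker ψ) = S.card := by
    have h1 := LinearMap.finrank_range_add_finrank_ker ψ
    have hr1 : Module.finrank ℝ (LinearMap.range ψ) = 1 := by
      have hne : LinearMap.range ψ ≠ ⊥ := by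
        intro h
        exact hψ0 (LinearMap.range_eq_bot.mp h)
      have hle : Module.finrank ℝ (LinearMap.range ψ) ≤ 1 := by
        simpa using (LinearMap.range ψ).finrank_le
      have hge : 0 < Module.finrank ℝ (LinearMap.range ψ) := by
        rcases Nat.eq_zero_or_pos (Module.finrank ℝ (LinearMap.range ψ)) with h | h
        · exact absurd (Submodule.finrank_eq_zero.mp h) hne
        · exact h
      omega
    rw [hfrP, hr1] at h1
    omega
  have hWrank : n - S.card ≤ Module.finrank ℝ (LinearMap.ker Φ) := by
    have h1 := LinearMap.finrank_range_add_finrank_ker Φ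
    have h2 : Module.finrank ℝ (LinearMap.range Φ) ≤ S.card := by
      rw [← hkerψ]
      exact Submodule.finrank_mono hrange
    rw [Module.finrank_fin_fun] at h1
    omega
  -- decode membership in ker Φ
  have hkerΦ : ∀ d : Fin n → ℝ, d ∈ LinearMap.ker Φ →
      (∑ i, d i = 0) ∧ ∀ j ∈ S, (∑ i, A i j * d i) = 0 := by
    intro d hd
    rw [LinearMap.mem_ker, hΦ] at hd
    have h1 : sumL d = 0 := congrArg Prod.fst hd
    have h2 : ∀ j : ↥S, colL A j.1 d = 0 := fun j =>
      congrFun (congrArg Prod.snd hd) j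
    exact ⟨h1, fun j hj => h2 ⟨j, hj⟩⟩
  -- the second map
  set φ : ↥(LinearMap.ker Φ) →ₗ[ℝ] (↥(Sᶜ) → ℝ) :=
    (LinearMap.pi fun j : ↥(Sᶜ) => colL A j.1).comp (LinearMap.ker Φ).subtype with hφ
  have hj0c : j0 ∈ Sᶜ := Finset.mem_compl.mpr hj0S
  have hfrC : Module.finrank ℝ (↥(Sᶜ) → ℝ) = n - S.card := by
    simp [Module.finrank_pi, Fintype.card_coe, Finset.card_compl]
  by_cases hker : LinearMap.ker φ = ⊥
  · -- injective case; φ is then surjective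
    have hinj : Function.Injective φ := LinearMap.ker_eq_bot.mp hker
    have hle : Module.finrank ℝ ↥(LinearMap.ker Φ) ≤ n - S.card := by
      rw [← hfrC]
      exact LinearMap.finrank_le_finrank_of_injective hinj
    have heq : Module.finrank ℝ ↥(LinearMap.ker Φ) = n - S.card :=
      le_antisymm hle hWrank
    have htop : LinearMap.range φ = ⊤ := by
      apply Submodule.eq_top_of_finrank_eq
      rw [LinearMap.finrank_range_of_inj hinj, heq, hfrC]
    obtain ⟨w, hw⟩ := LinearMap.range_eq_top.mp htop (fun _ => (1 : ℝ))
    obtain ⟨h1, h2⟩ := hkerΦ w.1 w.2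
    have hval : ∀ j (hj : j ∈ Sᶜ), (∑ i, A i j * (w.1) i) = 1 := by
      intro j hj
      have := congrFun hw ⟨j, hj⟩
      simpa [hφ, colL] using this
    refine ⟨w.1, ?_, h1, ?_⟩
    · intro h0
      have := hval j0 hj0c
      rw [h0] at this
      simp at this
    · intro j
      by_cases hjS : j ∈ S
      · rw [h2 j hjS]
      · rw [hval j (Finset.mem_compl.mpr hjS)]; norm_num
  · -- kernel nonzero case
    obtain ⟨w, hwker, hwne⟩ := (Submodule.ne_bot_iff _).mp hker
    obtain ⟨h1, h2⟩ := hkerΦ w.1 w.2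
    have hval : ∀ j (hj : j ∈ Sᶜ), (∑ i, A i j * (w.1) i) = 0 := by
      intro j hj
      have hw0 : φ w = 0 := hwker
      have := congrFun hw0 ⟨j, hj⟩
      simpa [hφ, colL] using this
    refine ⟨w.1, ?_, h1, ?_⟩
    · intro h0
      exact hwne (Subtype.ext h0)
    · intro j
      by_cases hjS : j ∈ S
      · rw [h2 j hjS]
      · rw [hval j (Finset.mem_compl.mpr hjS)]

theorem stmt_12 {n : ℕ} (A : Fin n → Fin n → ℝ)
    (πs : Fin n → ℝ) (hpos : ∀ i, 0 < πs i) (hsum : ∑ i, πs i = 1)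
    (hMax : IsMaximin A πs)
    (hUnique : ∀ π, IsMaximin A π → π = πs)
    (u : Fin n → ℝ) (t : ℝ) (hu : IsProb u)
    (hKKT1 : ∀ j, ∑ i, πs i * A i j ≤ t)
    (hKKT2 : ∀ j, u j * (∑ i, πs i * A i j - t) = 0)
    (hKKT3 : ∀ i, ∑ j, A i j * u j = t) :
    (∀ j, 0 < u j) ∧ (∀ j, ∑ i, πs i * A i j = t) := by
  rcases Nat.eq_zero_or_pos n with hn | hn
  · subst hn; exact ⟨fun j => j.elim0, fun j => j.elim0⟩
  have hupos : ∀ j, 0 < u j := by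
    by_contra hcon
    push_neg at hcon
    obtain ⟨j0, hj0le⟩ := hcon
    have hj0 : u j0 = 0 := le_antisymm hj0le (hu.1 j0)
    obtain ⟨d, hdne, hdsum, hdcol⟩ := exists_dir A u t hu.1 hu.2 hKKT3 j0 hj0
    haveI : Nonempty (Fin n) := ⟨⟨0, hn⟩⟩
    set ε : ℝ := univ.inf' univ_nonempty (fun i => πs i / (|d i| + 1)) with hε
    have hεpos : 0 < ε := by
      rw [hε, Finset.lt_inf'_iff]
      intro i _
      have := hpos i
      positivity
    have hεle : ∀ i, ε * |d i| ≤ πs i := by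
      intro i
      have h1 : ε ≤ πs i / (|d i| + 1) := Finset.inf'_le _ (mem_univ i)
      have h2 : (0:ℝ) < |d i| + 1 := by positivity
      rw [le_div_iff₀ h2] at h1
      nlinarith [abs_nonneg (d i), hεpos.le]
    set π₂ : Fin n → ℝ := fun i => πs i + ε * d i with hπ₂def
    have hπ₂ : IsProb π₂ := by
      constructor
      · intro i
        have ha := mul_le_mul_of_nonneg_left (neg_abs_le (d i)) hεpos.le
        have hb := hεle i
        simp only [hπ₂def]
        nlinarith
      · simp only [hπ₂def]
        rw [Finset.sum_add_distrib, hsum, ← Finset.mul_sum, hdsum, mul_zero, add_zero]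
    have hpay : ∀ π' : Fin n → ℝ, IsProb π' → payoff A πs π' ≤ payoff A π₂ π' := by
      intro π' hπ'
      have hsplit : payoff A π₂ π'
          = payoff A πs π' + ε * ∑ j, π' j * ∑ i, A i j * d i := by
        unfold payoff
        calc ∑ i, ∑ j, π₂ i * π' j * A i j
            = ∑ j, ∑ i, π₂ i * π' j * A i j := Finset.sum_comm
          _ = ∑ j, ((∑ i, πs i * π' j * A i j) + ε * (π' j * ∑ i, A i j * d i)) := by
              refine Finset.sum_congr rfl fun j _ => ?_
              rw [Finset.mul_sum, Finset.mul_sum, ← Finset.sum_add_distrib]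
              refine Finset.sum_congr rfl fun i _ => ?_
              show π₂ i * π' j * A i j = πs i * π' j * A i j + ε * (π' j * (A i j * d i))
              simp only [hπ₂def]; ring
          _ = (∑ j, ∑ i, πs i * π' j * A i j) + ε * ∑ j, π' j * ∑ i, A i j * d i := by
              rw [Finset.sum_add_distrib, ← Finset.mul_sum]
          _ = (∑ i, ∑ j, πs i * π' j * A i j) + ε * ∑ j, π' j * ∑ i, A i j * d i := by
              rw [Finset.sum_comm]
      rw [hsplit]
      have hnn : 0 ≤ ∑ j, π' j * ∑ i, A i j * d i :=
        Finset.sum_nonneg fun j _ => mul_nonneg (hπ'.1 j) (hdcol j)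
      nlinarith
    have hprob_s : IsProb πs := ⟨fun i => (hpos i).le, hsum⟩
    have hworst : worstCase A πs ≤ worstCase A π₂ := by
      unfold worstCase
      refine le_csInf ⟨payoff A π₂ πs, ⟨πs, hprob_s, rfl⟩⟩ ?_
      rintro b ⟨π', hπ', rfl⟩
      exact (worst_le A hprob_s hπ').trans (hpay π' hπ')
    have hmax₂ : IsMaximin A π₂ := ⟨hπ₂, fun π' h => (hMax.2 π' h).trans hworst⟩
    have heq := hUnique π₂ hmax₂
    apply hdne
    funext i
    have h3 := congrFun heq i
    simp only [hπ₂def] at h3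
    have h4 : ε * d i = 0 := by linarith
    have h5 : d i = 0 := (mul_eq_zero.mp h4).resolve_left hεpos.ne'
    simpa using h5
  refine ⟨hupos, fun j => ?_⟩
  have h2 := hKKT2 j
  rcases mul_eq_zero.mp h2 with h | h
  · exact absurd h (hupos j).ne'
  · linarith
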